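/- arXiv:2409.03435 — 4 statements merged into one kernel-verified Lean document; each statement's English description precedes it below -/
import Mathlib

section
/- The recursive construction for d = 2^n — taking for each of the 2^{n-1}−1 matchings T of the 2^{n-1} case the merged matching T ∪ (T + 2^{n-1}), together with the 2^{n-1} crossed matchings {(k, 2^{n-1} + ((k+m) mod 2^{n-1})) : k ∈ [2^{n-1}]} for 0 ≤ m < 2^{n-1} — produces exactly 2^n − 1 perfect matchings on {0,...,2^n−1} whose union is all pairs (j,k) with j < k, each appearing exactly once. -/
/-- A matching on {0,...,d-1}: a finite set of pairs (j,k) with j < k < d,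
pairwise vertex-disjoint. -/
def IsMatchingOn (d : ℕ) (M : Finset (ℕ × ℕ)) : Prop :=
  (∀ p ∈ M, p.1 < p.2 ∧ p.2 < d) ∧
  (∀ p ∈ M, ∀ q ∈ M, p ≠ q →
    p.1 ≠ q.1 ∧ p.1 ≠ q.2 ∧ p.2 ≠ q.1 ∧ p.2 ≠ q.2)

/-- A perfect matching on {0,...,d-1}: a matching covering every vertex. -/
def IsPerfectMatchingOn (d : ℕ) (M : Finset (ℕ × ℕ)) : Prop :=
  IsMatchingOn d M ∧ ∀ v < d, ∃ p ∈ M, v = p.1 ∨ v = p.2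

/-- The recursive construction of the 2^n - 1 matchings for dimension 2^n:
base case the single matching {(0,1)}; at each step, merge the previous matchings with
their shifts by 2^(n-1), and add the 2^(n-1) crossed matchings. -/
def construct : ℕ → List (Finset (ℕ × ℕ))
  | 0 => []
  | 1 => [({(0, 1)} : Finset (ℕ × ℕ))]
  | (n + 2) =>
      ((construct (n + 1)).map fun T =>
        T ∪ T.image fun p => (p.1 + 2 ^ (n + 1), p.2 + 2 ^ (n + 1))) ++
      (List.range (2 ^ (n + 1))).map fun m =>
        (Finset.range (2 ^ (n + 1))).image fun k =>
          (k, 2 ^ (n + 1) + (k + m) % 2 ^ (n + 1))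

lemma mem_cross {s m j k : ℕ} :
    ((j, k) ∈ (Finset.range s).image fun x => (x, s + (x + m) % s)) ↔
      j < s ∧ k = s + (j + m) % s := by
  simp only [Finset.mem_image, Finset.mem_range, Prod.mk.injEq]
  constructor
  · rintro ⟨x, hx, rfl, rfl⟩; exact ⟨hx, rfl⟩
  · rintro ⟨hj, rfl⟩; exact ⟨j, hj, rfl, rfl⟩

lemma mod_cancel {s m m' j : ℕ} (hm : m < s) (hm' : m' < s)
    (h : (j + m) % s = (j + m') % s) : m = m' := by
  have h3 : m % s = m' % s := Nat.ModEq.add_left_cancel' j h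
  rwa [Nat.mod_eq_of_lt hm, Nat.mod_eq_of_lt hm'] at h3

lemma cross_perfect {s m : ℕ} (hs : 0 < s) :
    IsPerfectMatchingOn (2 * s)
      ((Finset.range s).image fun x => (x, s + (x + m) % s)) := by
  refine ⟨⟨?_, ?_⟩, ?_⟩
  · intro p hp
    obtain ⟨x, hx, rfl⟩ := Finset.mem_image.mp hp
    simp only [Finset.mem_range] at hx
    have := Nat.mod_lt (x + m) hs
    constructor <;> simp only <;> omega
  · intro p hp q hq hpq
    obtain ⟨x, hx, rfl⟩ := Finset.mem_image.mp hp
    obtain ⟨y, hy, rfl⟩ := Finset.mem_image.mp hq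
    simp only [Finset.mem_range] at hx hy
    have hxy : x ≠ y := by rintro rfl; exact hpq rfl
    have hmod : (x + m) % s ≠ (y + m) % s := fun h => hxy (mod_cancel hx hy (by rw [Nat.add_comm x m, Nat.add_comm y m] at h; exact h))
    refine ⟨hxy, ?_, ?_, ?_⟩ <;> simp only <;> omega
  · intro v hv
    by_cases h : v < s
    · exact ⟨(v, s + (v + m) % s),
        Finset.mem_image.mpr ⟨v, Finset.mem_range.mpr h, rfl⟩, Or.inl rfl⟩
    · have hr : v - s < s := by omega
      set x := (v - s + s - m % s) % s with hxdef
      have hms : m % s < s := Nat.mod_lt m hs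
      have hx : x < s := Nat.mod_lt _ hs
      have hxm : (x + m) % s = v - s := by
        rw [Nat.add_mod x m s, Nat.mod_eq_of_lt hx, hxdef, Nat.mod_add_mod]
        have h2 : v - s + s - m % s + m % s = v - s + s := by omega
        rw [h2, Nat.add_mod_right, Nat.mod_eq_of_lt hr]
      refine ⟨(x, s + (x + m) % s),
        Finset.mem_image.mpr ⟨x, Finset.mem_range.mpr hx, rfl⟩, Or.inr ?_⟩
      simp only [hxm]; omega

lemma merge_perfect {s : ℕ} {T : Finset (ℕ × ℕ)} (hs : 0 < s)
    (h : IsPerfectMatchingOn s T) :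
    IsPerfectMatchingOn (2 * s) (T ∪ T.image fun p => (p.1 + s, p.2 + s)) := by
  obtain ⟨⟨hb, hd⟩, hc⟩ := h
  have hmem : ∀ q, q ∈ (T ∪ T.image fun p => (p.1 + s, p.2 + s)) ↔
      q ∈ T ∨ ∃ p ∈ T, (p.1 + s, p.2 + s) = q := by
    intro q; simp [Finset.mem_union, Finset.mem_image]
  refine ⟨⟨?_, ?_⟩, ?_⟩
  · intro p hp
    rcases (hmem p).mp hp with h1 | ⟨q, hq, rfl⟩
    · have := hb p h1; omega
    · have := hb q hq; simp only; omega
  · intro p hp q hq hpq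
    rcases (hmem p).mp hp with h1 | ⟨p', hp', rfl⟩ <;>
      rcases (hmem q).mp hq with h2 | ⟨q', hq', rfl⟩
    · exact hd p h1 q h2 hpq
    · have b1 := hb p h1; have b2 := hb q' hq'; simp only; omega
    · have b1 := hb p' hp'; have b2 := hb q h2; simp only; omega
    · have hne : p' ≠ q' := by
        rintro rfl; exact hpq rfl
      have := hd p' hp' q' hq' hne
      simp only; omega
  · intro v hv
    by_cases h : v < s
    · obtain ⟨p, hp, hvp⟩ := hc v h
      exact ⟨p, (hmem p).mpr (Or.inl hp), hvp⟩
    · obtain ⟨p, hp, hvp⟩ := hc (v - s) (by omega)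
      refine ⟨(p.1 + s, p.2 + s), (hmem _).mpr (Or.inr ⟨p, hp, rfl⟩), ?_⟩
      simp only; omega

/-- The recursive construction for d = 2^n produces exactly 2^n - 1 perfect matchings
on {0,...,2^n-1}, whose union is all pairs (j,k) with j < k, each appearing exactly once. -/
theorem stmt_12 (n : ℕ) (hn : 1 ≤ n) :
    (construct n).length = 2 ^ n - 1 ∧
    (∀ T ∈ construct n, IsPerfectMatchingOn (2 ^ n) T) ∧
    (∀ j k : ℕ, j < k → k < 2 ^ n →
      ((construct n).countP fun T => decide ((j, k) ∈ T)) = 1) := by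
  induction n with
  | zero => omega
  | succ m ih =>
    cases m with
    | zero =>
      refine ⟨rfl, ?_, ?_⟩
      · intro T hT
        simp only [construct, List.mem_singleton] at hT
        subst hT
        refine ⟨⟨?_, ?_⟩, ?_⟩
        · intro p hp; simp only [Finset.mem_singleton] at hp; subst hp; simp
        · intro p hp q hq hpq
          simp only [Finset.mem_singleton] at hp hq
          subst hp; subst hq; exact absurd rfl hpq
        · intro v hv
          interval_cases v
          · exact ⟨(0, 1), Finset.mem_singleton_self _, Or.inl rfl⟩
          · exact ⟨(0, 1), Finset.mem_singleton_self _, Or.inr rfl⟩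
      · intro j k hjk hk
        have : j = 0 ∧ k = 1 := by constructor <;> omega
        obtain ⟨rfl, rfl⟩ := this
        simp [construct, List.countP, List.countP.go]
    | succ a =>
      obtain ⟨IH1, IH2, IH3⟩ := ih (by omega)
      set s := 2 ^ (a + 1) with hsdef
      have hs : 0 < s := Nat.pow_pos (by norm_num)
      have h2s : 2 ^ (a + 2) = 2 * s := by rw [hsdef, pow_succ]; ring
      have hcon : construct (a + 2) =
          ((construct (a + 1)).map fun T =>
            T ∪ T.image fun p => (p.1 + s, p.2 + s)) ++
          (List.range s).map fun m =>
            (Finset.range s).image fun x => (x, s + (x + m) % s) := rfl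
      refine ⟨?_, ?_, ?_⟩
      · rw [hcon, List.length_append, List.length_map, List.length_map,
          List.length_range, IH1, h2s]
        omega
      · intro T hT
        rw [hcon, List.mem_append] at hT
        rcases hT with hT | hT
        · obtain ⟨T', hT', rfl⟩ := List.mem_map.mp hT
          rw [h2s]
          exact merge_perfect hs (IH2 T' hT')
        · obtain ⟨m, _, rfl⟩ := List.mem_map.mp hT
          rw [h2s]
          exact cross_perfect hs
      · intro j k hjk hk
        rw [h2s] at hk
        rw [hcon, List.countP_append, List.countP_map, List.countP_map]
        -- characterize membership in merged matchings
        have hmergemem : ∀ T' ∈ construct (a + 1),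
            ((j, k) ∈ T' ∪ T'.image fun p => (p.1 + s, p.2 + s)) ↔
            ((j, k) ∈ T' ∨ (s ≤ j ∧ (j - s, k - s) ∈ T')) := by
          intro T' hT'
          obtain ⟨⟨hb, _⟩, _⟩ := IH2 T' hT'
          simp only [Finset.mem_union, Finset.mem_image, Prod.mk.injEq]
          constructor
          · rintro (h1 | ⟨⟨p1, p2⟩, hp, h1, h2⟩)
            · exact Or.inl h1
            · right
              have hbp := hb (p1, p2) hp
              simp only at hbp h1 h2
              refine ⟨by omega, ?_⟩
              have heq : (j - s, k - s) = (p1, p2) := by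
                rw [Prod.mk.injEq]; omega
              rw [heq]; exact hp
          · rintro (h1 | ⟨hsj, h1⟩)
            · exact Or.inl h1
            · right
              refine ⟨(j - s, k - s), h1, ?_, ?_⟩ <;> simp only <;> omega
        by_cases hk1 : k < s
        · -- both in lower half
          have c1 : ((construct (a + 1)).countP
              ((fun T => decide ((j, k) ∈ T)) ∘ fun T =>
                T ∪ T.image fun p => (p.1 + s, p.2 + s))) = 1 := by
            rw [List.countP_congr (q := fun T => decide ((j, k) ∈ T)) ?_]
            · exact IH3 j k hjk hk1
            · intro T' hT'
              simp only [Function.comp_apply, decide_eq_true_eq]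
              rw [hmergemem T' hT']
              constructor
              · rintro (h1 | ⟨hsj, _⟩)
                · exact h1
                · omega
              · exact Or.inl
          have c2 : ((List.range s).countP
              ((fun T => decide ((j, k) ∈ T)) ∘ fun m =>
                (Finset.range s).image fun x => (x, s + (x + m) % s))) = 0 := by
            rw [List.countP_eq_zero]
            intro m _
            simp only [Function.comp_apply, decide_eq_true_eq, mem_cross]
            omega
          omega
        · by_cases hj1 : s ≤ j
          · -- both in upper half
            have c1 : ((construct (a + 1)).countP
                ((fun T => decide ((j, k) ∈ T)) ∘ fun T =>
                  T ∪ T.image fun p => (p.1 + s, p.2 + s))) = 1 := by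
              rw [List.countP_congr (q := fun T => decide ((j - s, k - s) ∈ T)) ?_]
              · exact IH3 (j - s) (k - s) (by omega) (by omega)
              · intro T' hT'
                obtain ⟨⟨hb, _⟩, _⟩ := IH2 T' hT'
                simp only [Function.comp_apply, decide_eq_true_eq]
                rw [hmergemem T' hT']
                constructor
                · rintro (h1 | ⟨_, h1⟩)
                  · have := hb _ h1; omega
                  · exact h1
                · intro h1; exact Or.inr ⟨hj1, h1⟩
            have c2 : ((List.range s).countP
                ((fun T => decide ((j, k) ∈ T)) ∘ fun m =>
                  (Finset.range s).image fun x => (x, s + (x + m) % s))) = 0 := by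
              rw [List.countP_eq_zero]
              intro m _
              simp only [Function.comp_apply, decide_eq_true_eq, mem_cross]
              omega
            omega
          · -- crossed case: j < s ≤ k
            push_neg at hk1 hj1
            have c1 : ((construct (a + 1)).countP
                ((fun T => decide ((j, k) ∈ T)) ∘ fun T =>
                  T ∪ T.image fun p => (p.1 + s, p.2 + s))) = 0 := by
              rw [List.countP_eq_zero]
              intro T' hT'
              obtain ⟨⟨hb, _⟩, _⟩ := IH2 T' hT'
              simp only [Function.comp_apply, decide_eq_true_eq]
              rw [hmergemem T' hT']
              rintro (h1 | ⟨hsj, _⟩)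
              · have := hb _ h1; omega
              · omega
            set m0 := (k - j) % s with hm0def
            have hm0 : m0 < s := Nat.mod_lt _ hs
            have hm0eq : (j + m0) % s = k - s := by
              have h1 : (j + m0) % s = (j + (k - j)) % s := Nat.add_mod_mod _ _ _
              rw [h1]
              have h2 : j + (k - j) = k := by omega
              rw [h2]
              rw [Nat.mod_eq_sub_mod hk1, Nat.mod_eq_of_lt (by omega)]
            have c2 : ((List.range s).countP
                ((fun T => decide ((j, k) ∈ T)) ∘ fun m =>
                  (Finset.range s).image fun x => (x, s + (x + m) % s))) = 1 := by
              rw [List.countP_congr (q := fun m => m == m0) ?_]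
              · exact List.count_eq_one_of_mem List.nodup_range
                  (List.mem_range.mpr hm0)
              · intro m hm
                rw [List.mem_range] at hm
                simp only [Function.comp_apply, decide_eq_true_eq, mem_cross,
                  beq_iff_eq]
                constructor
                · rintro ⟨-, hkeq⟩
                  have : (j + m) % s = k - s := by omega
                  exact mod_cancel hm hm0 (this.trans hm0eq.symm)
                · rintro rfl
                  exact ⟨hj1, by omega⟩
            omega
end

section
/- Let d = 2^n and let r ≥ 1 with 2^{m-1} < r ≤ 2^m for some m ≤ n. In the recursive matching construction for dimension 2^n, the number of matchings containing at least one pair (j,k) with |j−k| ≤ r is at most 2^m − 1 + r(n − m), which is strictly less than r·(log₂ d + 2 − m) ≤ r·log₂(4d/r). -/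
lemma construct_length : (n : ℕ) → (construct n).length = 2 ^ n - 1
  | 0 => rfl
  | 1 => rfl
  | (n+2) => by
      have h1 : (1:ℕ) ≤ 2 ^ (n+1) := Nat.one_le_two_pow
      have h2 : (2:ℕ) ^ (n+2) = 2 * 2 ^ (n+1) := by ring
      simp [construct, construct_length (n+1)]
      omega

lemma countP_range_interval (r : ℕ) (N : ℕ) :
    (List.range N).countP (fun x => decide (1 ≤ x ∧ x ≤ r)) ≤ min (N-1) r := by
  induction N with
  | zero => simp
  | succ N ih =>
      rw [List.range_succ, List.countP_append]
      by_cases h : 1 ≤ N ∧ N ≤ r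
      · have hdt : decide (1 ≤ N ∧ N ≤ r) = true := decide_eq_true h
        simp only [List.countP_cons, List.countP_nil, hdt, if_true]
        omega
      · have hdf : decide (1 ≤ N ∧ N ≤ r) = false := decide_eq_false h
        simp only [List.countP_cons, List.countP_nil, hdf, Bool.false_eq_true, if_false]
        omega

lemma crossed_bound (r N m' : ℕ) (hm' : m' < N)
    (h : ∃ p ∈ (Finset.range N).image (fun k => (k, N + (k + m') % N)), p.2 - p.1 ≤ r) :
    m' ≤ r ∧ (m' = 0 → N ≤ r) := by
  obtain ⟨p, hp, hd⟩ := h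
  obtain ⟨k, hk, rfl⟩ := Finset.mem_image.mp hp
  rw [Finset.mem_range] at hk
  simp only at hd
  rcases Nat.lt_or_ge (k + m') N with h1 | h1
  · rw [Nat.mod_eq_of_lt h1] at hd
    omega
  · have hmm : (k + m') % N = k + m' - N := by
      rw [Nat.mod_eq_sub_mod h1]
      exact Nat.mod_eq_of_lt (by omega)
    rw [hmm] at hd
    omega

lemma step_bound (r k : ℕ) :
    (construct (k+2)).countP (fun T => decide (∃ p ∈ T, p.2 - p.1 ≤ r)) ≤
    (construct (k+1)).countP (fun T => decide (∃ p ∈ T, p.2 - p.1 ≤ r)) + r := by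
  set f : Finset (ℕ × ℕ) → Bool := fun T => decide (∃ p ∈ T, p.2 - p.1 ≤ r) with hf
  set N := 2 ^ (k+1) with hN
  have hNpos : 0 < N := Nat.pow_pos (by norm_num)
  rw [show construct (k+2) =
      ((construct (k + 1)).map fun T =>
        T ∪ T.image fun p => (p.1 + N, p.2 + N)) ++
      (List.range N).map (fun m =>
        (Finset.range N).image fun j => (j, N + (j + m) % N)) from rfl,
    List.countP_append, List.countP_map, List.countP_map]
  have hmerge : ∀ T ∈ construct (k+1),
      (f ∘ fun T => T ∪ T.image fun p => (p.1 + N, p.2 + N)) T = true ↔ f T = true := by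
    intro T _
    simp only [Function.comp, hf, decide_eq_true_eq]
    constructor
    · rintro ⟨p, hp, hd⟩
      rcases Finset.mem_union.mp hp with h | h
      · exact ⟨p, h, hd⟩
      · obtain ⟨q, hq, rfl⟩ := Finset.mem_image.mp h
        refine ⟨q, hq, ?_⟩
        have hd' : q.2 + N - (q.1 + N) ≤ r := hd
        omega
    · rintro ⟨p, hp, hd⟩
      exact ⟨p, Finset.mem_union_left _ hp, hd⟩
  rw [List.countP_congr hmerge]
  have hcross : (List.range N).countP
      (f ∘ fun m => (Finset.range N).image fun j => (j, N + (j + m) % N)) ≤ r := by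
    by_cases hNr : N ≤ r
    · calc _ ≤ (List.range N).length := List.countP_le_length
        _ = N := List.length_range
        _ ≤ r := hNr
    · have hmono : ∀ x ∈ List.range N,
          (f ∘ fun m => (Finset.range N).image fun j => (j, N + (j + m) % N)) x = true →
          (fun x => decide (1 ≤ x ∧ x ≤ r)) x = true := by
        intro x hx hfx
        rw [List.mem_range] at hx
        simp only [Function.comp, hf, decide_eq_true_eq] at hfx
        have := crossed_bound r N x hx hfx
        simp only [decide_eq_true_eq]
        omega
      calc _ ≤ (List.range N).countP (fun x => decide (1 ≤ x ∧ x ≤ r)) :=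
            List.countP_mono_left hmono
        _ ≤ min (N-1) r := countP_range_interval r N
        _ ≤ r := min_le_right _ _
  omega

lemma count_bound (r m : ℕ) (hm1 : 1 ≤ m) (hr1 : 1 ≤ r) :
    ∀ n, m ≤ n → (construct n).countP (fun T => decide (∃ p ∈ T, p.2 - p.1 ≤ r)) ≤
      2 ^ m - 1 + r * (n - m) := by
  intro n hn
  induction n, hn using Nat.le_induction with
  | base =>
      simp only [Nat.sub_self, Nat.mul_zero, Nat.add_zero]
      calc _ ≤ (construct m).length := List.countP_le_length
        _ = 2 ^ m - 1 := construct_length m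
  | succ n hn ih =>
      obtain ⟨k, rfl⟩ : ∃ k, n = k + 1 := ⟨n - 1, by omega⟩
      calc _ ≤ (construct (k+1)).countP (fun T => decide (∃ p ∈ T, p.2 - p.1 ≤ r)) + r :=
            step_bound r k
        _ ≤ 2 ^ m - 1 + r * (k + 1 - m) + r := by omega
        _ = 2 ^ m - 1 + r * (k + 1 + 1 - m) := by
            have : k + 1 + 1 - m = (k + 1 - m) + 1 := by omega
            rw [this, Nat.mul_succ]; omega


/-- Let d = 2^n and 2^(m-1) < r ≤ 2^m with 1 ≤ m ≤ n. In the recursive matching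
construction for dimension 2^n, the number of matchings containing a pair (j,k) with
|j - k| ≤ r is at most 2^m - 1 + r(n - m), which is strictly less than
r·(log₂ d + 2 - m), which is at most r·log₂(4d/r). -/
theorem stmt_13 (n m r : ℕ) (hm1 : 1 ≤ m) (hmn : m ≤ n) (hr1 : 1 ≤ r)
    (hlow : 2 ^ (m - 1) < r) (hhigh : r ≤ 2 ^ m) :
    ((construct n).countP fun T => decide (∃ p ∈ T, p.2 - p.1 ≤ r))
        ≤ 2 ^ m - 1 + r * (n - m) ∧
    ((2 ^ m - 1 + r * (n - m) : ℕ) : ℝ)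
        < r * (Real.logb 2 (2 ^ n) + 2 - m) ∧
    (r : ℝ) * (Real.logb 2 (2 ^ n) + 2 - m)
        ≤ r * Real.logb 2 (4 * 2 ^ n / r) := by
  have hlogn : Real.logb 2 ((2:ℝ) ^ n) = n := by
    rw [Real.logb_pow, Real.logb_self_eq_one (by norm_num)]; ring
  have hpowm : (2:ℕ) ^ m = 2 * 2 ^ (m-1) := by
    rw [← pow_succ']
    congr 1
    omega
  refine ⟨count_bound r m hm1 hr1 n hmn, ?_, ?_⟩
  · have h1 : (1:ℕ) ≤ 2 ^ m := Nat.one_le_two_pow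
    have hcast : ((2 ^ m - 1 + r * (n - m) : ℕ) : ℝ)
        = (2:ℝ)^m - 1 + r * (n - m) := by
      push_cast [Nat.cast_sub h1, Nat.cast_sub hmn]
      ring
    rw [hcast, hlogn]
    have h2 : (2:ℝ)^m < 2 * r := by
      have : (2:ℕ)^m < 2 * r := by omega
      exact_mod_cast this
    nlinarith [h2]
  · have hr0 : (0:ℝ) < r := by exact_mod_cast hr1
    have h4 : (4:ℝ) * 2 ^ n = 2 ^ (n + 2) := by ring
    rw [hlogn, h4]
    apply mul_le_mul_of_nonneg_left _ (le_of_lt hr0)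
    rw [Real.logb_div (by positivity) (ne_of_gt hr0), Real.logb_pow,
      Real.logb_self_eq_one (by norm_num)]
    have hlogr : Real.logb 2 (r:ℝ) ≤ m := by
      have : Real.logb 2 (r:ℝ) ≤ Real.logb 2 ((2:ℝ)^m) := by
        rw [Real.logb_le_logb (by norm_num) hr0 (by positivity)]
        exact_mod_cast hhigh
      rw [Real.logb_pow, Real.logb_self_eq_one (by norm_num)] at this
      linarith
    push_cast
    linarith
end

section
/- For n ≥ 1 and 0 ≤ l ≤ n−1, the cyclic shift unitary U_n on ℂ^{2^n} defined by U_n|m⟩ = |(m−1) mod 2^n⟩ satisfies (U_n)^{2^l} = U_{n−l} ⊗ I^{⊗l}, i.e., its 2^l-th power acts as the cyclic shift on the first n−l qubits tensored with identity on the last l qubits. -/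
/-- The cyclic shift unitary on ℂ^(2^k): U_k |m⟩ = |(m-1) mod 2^k⟩, i.e.
U_k = ∑_m |m-1 mod 2^k⟩⟨m|. -/
noncomputable def shiftU (k : ℕ) : Matrix (Fin (2 ^ k)) (Fin (2 ^ k)) ℂ :=
  Matrix.of fun a b => if (a : ℕ) = ((b : ℕ) + (2 ^ k - 1)) % 2 ^ k then 1 else 0

open Kronecker

lemma mod_shift_iff (m x b : ℕ) (hm : 0 < m) (hb : b < m) :
    x % m = (b + (m - 1)) % m ↔ (x + 1) % m = b := by
  constructor
  · intro h
    have h1 : x ≡ b + (m - 1) [MOD m] := h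
    have h2 : x + 1 ≡ b + (m - 1) + 1 [MOD m] := h1.add_right 1
    have h3 : b + (m - 1) + 1 = b + m := by omega
    have h4 : x + 1 ≡ b [MOD m] := by
      rw [h3] at h2
      exact h2.trans (Nat.add_mod_right b m)
    have := h4
    unfold Nat.ModEq at this
    rw [Nat.mod_eq_of_lt hb] at this
    exact this
  · intro h
    have h4 : x + 1 ≡ b [MOD m] := by
      unfold Nat.ModEq; rw [Nat.mod_eq_of_lt hb]; exact h
    have h5 : b ≡ b + m [MOD m] := (Nat.add_mod_right b m).symm
    have h6 : x + 1 ≡ b + (m - 1) + 1 [MOD m] := by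
      have : b + (m - 1) + 1 = b + m := by omega
      rw [this]; exact h4.trans h5
    exact Nat.ModEq.add_right_cancel' 1 h6

lemma shiftU_pow (k p : ℕ) : (shiftU k) ^ p =
    Matrix.of fun a b : Fin (2 ^ k) => if ((a : ℕ) + p) % 2 ^ k = b then 1 else 0 := by
  induction p with
  | zero =>
    ext a b
    simp [Matrix.one_apply, Nat.mod_eq_of_lt a.isLt, Fin.val_inj, eq_comm]
  | succ p ih =>
    ext a b
    rw [pow_succ, ih]
    simp only [Matrix.mul_apply, Matrix.of_apply, shiftU]
    have hlt : ((a : ℕ) + p) % 2 ^ k < 2 ^ k := Nat.mod_lt _ (Nat.two_pow_pos k)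
    set c0 : Fin (2 ^ k) := ⟨((a : ℕ) + p) % 2 ^ k, hlt⟩ with hc0
    have hrw : ∀ c : Fin (2 ^ k), (((a : ℕ) + p) % 2 ^ k = (c : ℕ)) ↔ c = c0 := by
      intro c; rw [Fin.ext_iff]; exact eq_comm
    simp_rw [hrw, ite_mul, one_mul, zero_mul]
    rw [Finset.sum_ite_eq' Finset.univ c0 (fun c => if (c : ℕ) = ((b : ℕ) + (2 ^ k - 1)) % 2 ^ k then (1:ℂ) else 0)]
    simp only [Finset.mem_univ, if_true]
    have : ((c0 : ℕ) = ((b : ℕ) + (2 ^ k - 1)) % 2 ^ k) ↔ (((a : ℕ) + (p + 1)) % 2 ^ k = b) := by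
      have hmm := mod_shift_iff (2 ^ k) ((a : ℕ) + p) (b : ℕ)
        (Nat.two_pow_pos k) b.isLt
      have hc0v : (c0 : ℕ) = ((a : ℕ) + p) % 2 ^ k := rfl
      rw [hc0v, show (a : ℕ) + (p + 1) = (a : ℕ) + p + 1 from (add_assoc _ _ _).symm]
      exact hmm
    rw [if_congr this rfl rfl]

lemma key_split (c d a b : ℕ) (hc : 0 < c) (hd : 0 < d) (ha : a < c * d) (hb : b < c * d) :
    ((a + c) % (c * d) = b) ↔ ((a / c + 1) % d = b / c ∧ a % c = b % c) := by
  obtain ⟨a1, a2, ha2, rfl⟩ : ∃ a1 a2, a2 < c ∧ a = c * a1 + a2 :=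
    ⟨a / c, a % c, Nat.mod_lt _ hc, (Nat.div_add_mod a c).symm⟩
  obtain ⟨b1, b2, hb2, rfl⟩ : ∃ b1 b2, b2 < c ∧ b = c * b1 + b2 :=
    ⟨b / c, b % c, Nat.mod_lt _ hc, (Nat.div_add_mod b c).symm⟩
  have ha1 : a1 < d := by
    have h1 : c * a1 < c * d := lt_of_le_of_lt (Nat.le_add_right _ _) ha
    exact Nat.lt_of_mul_lt_mul_left h1
  have hb1 : b1 < d := by
    have h1 : c * b1 < c * d := lt_of_le_of_lt (Nat.le_add_right _ _) hb
    exact Nat.lt_of_mul_lt_mul_left h1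
  have hda : (c * a1 + a2) / c = a1 := by
    rw [Nat.mul_add_div hc, Nat.div_eq_of_lt ha2]; omega
  have hdb : (c * b1 + b2) / c = b1 := by
    rw [Nat.mul_add_div hc, Nat.div_eq_of_lt hb2]; omega
  have hma : (c * a1 + a2) % c = a2 := by
    rw [Nat.mul_add_mod]; exact Nat.mod_eq_of_lt ha2
  have hmb : (c * b1 + b2) % c = b2 := by
    rw [Nat.mul_add_mod]; exact Nat.mod_eq_of_lt hb2
  rw [hda, hdb, hma, hmb]
  have hL : (c * a1 + a2 + c) % (c * d) = c * ((a1 + 1) % d) + a2 := by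
    have h1 : c * a1 + a2 + c = c * (a1 + 1) + a2 := by ring
    have ha2cd : a2 < c * d := lt_of_lt_of_le ha2 (Nat.le_mul_of_pos_right c hd)
    rw [h1, Nat.add_mod, Nat.mul_mod_mul_left, Nat.mod_eq_of_lt ha2cd]
    apply Nat.mod_eq_of_lt
    have hr : (a1 + 1) % d < d := Nat.mod_lt (a1 + 1) hd
    calc c * ((a1 + 1) % d) + a2 < c * ((a1 + 1) % d) + c := by omega
      _ = c * ((a1 + 1) % d + 1) := by ring
      _ ≤ c * d := Nat.mul_le_mul_left c (by omega)
  rw [hL]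
  constructor
  · intro h
    have h1 : (c * ((a1 + 1) % d) + a2) / c = (a1 + 1) % d := by
      rw [Nat.mul_add_div hc, Nat.div_eq_of_lt ha2]; omega
    have h2 : (c * ((a1 + 1) % d) + a2) % c = a2 := by
      rw [Nat.mul_add_mod]; exact Nat.mod_eq_of_lt ha2
    constructor
    · rw [← h1, h, hdb]
    · rw [← h2, h, hmb]
  · rintro ⟨h1, h2⟩
    rw [h1, h2]


/-- For 1 ≤ n and l ≤ n-1, the 2^l-th power of the cyclic shift on n qubits is the
cyclic shift on the first n-l qubits tensored with the identity on the last l qubits,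
under the binary (big-endian) identification ℂ^(2^n) ≃ ℂ^(2^(n-l)) ⊗ ℂ^(2^l). -/
theorem stmt_14 (n l : ℕ) (hn : 1 ≤ n) (hl : l ≤ n - 1) :
    (shiftU n) ^ (2 ^ l) =
      Matrix.reindex
        (finProdFinEquiv.trans (finCongr (by rw [← pow_add]; congr 1; omega)))
        (finProdFinEquiv.trans (finCongr (by rw [← pow_add]; congr 1; omega)))
        (shiftU (n - l) ⊗ₖ (1 : Matrix (Fin (2 ^ l)) (Fin (2 ^ l)) ℂ)) := by
  rw [shiftU_pow]
  ext a b
  simp only [Matrix.reindex_apply, Matrix.submatrix_apply, Equiv.symm_trans_apply,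
    Matrix.kroneckerMap_apply, Matrix.of_apply, shiftU, Matrix.one_apply]
  have hdecomp : ∀ x : Fin (2 ^ n),
      ((finProdFinEquiv.symm ((finCongr (by rw [← pow_add]; congr 1; omega) :
        Fin (2 ^ (n - l) * 2 ^ l) ≃ Fin (2 ^ n)).symm x)).1 : ℕ) = (x : ℕ) / 2 ^ l ∧
      ((finProdFinEquiv.symm ((finCongr (by rw [← pow_add]; congr 1; omega) :
        Fin (2 ^ (n - l) * 2 ^ l) ≃ Fin (2 ^ n)).symm x)).2 : ℕ) = (x : ℕ) % 2 ^ l := by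
    intro x
    constructor <;> simp [finProdFinEquiv, Fin.divNat, Fin.modNat]
  obtain ⟨h1a, h2a⟩ := hdecomp a
  obtain ⟨h1b, h2b⟩ := hdecomp b
  simp only [Fin.ext_iff]
  rw [h1a, h2a, h1b, h2b]
  have hc : 0 < 2 ^ l := Nat.two_pow_pos _
  have hd : 0 < 2 ^ (n - l) := Nat.two_pow_pos _
  have hcd : 2 ^ l * 2 ^ (n - l) = 2 ^ n := by rw [← pow_add]; congr 1; omega
  have ha : (a : ℕ) < 2 ^ l * 2 ^ (n - l) := by rw [hcd]; exact a.isLt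
  have hb : (b : ℕ) < 2 ^ l * 2 ^ (n - l) := by rw [hcd]; exact b.isLt
  have hks := key_split (2 ^ l) (2 ^ (n - l)) (a : ℕ) (b : ℕ) hc hd ha hb
  rw [hcd] at hks
  have hadl : (a : ℕ) / 2 ^ l < 2 ^ (n - l) := Nat.div_lt_of_lt_mul ha
  have hbdl : (b : ℕ) / 2 ^ l < 2 ^ (n - l) := Nat.div_lt_of_lt_mul hb
  have hms := mod_shift_iff (2 ^ (n - l)) ((a : ℕ) / 2 ^ l) ((b : ℕ) / 2 ^ l) hd hbdl
  rw [Nat.mod_eq_of_lt hadl] at hms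
  have hprod : ∀ (P Q : Prop) [Decidable P] [Decidable Q],
      (if P then (1 : ℂ) else 0) * (if Q then 1 else 0) = if P ∧ Q then 1 else 0 := by
    intro P Q _ _
    by_cases hP : P <;> by_cases hQ : Q <;> simp [hP, hQ]
  rw [hprod]
  exact if_congr (hks.trans (and_congr hms.symm Iff.rfl)) rfl rfl
end

section
/- For even d where d/2 is even, given d/2 − 1 matchings covering all pairs on {0,...,d/2−1}, the construction assigning merged matchings T_t^d = T_t^{d/2} ∪ (T_t^{d/2} + d/2) for 1 ≤ t ≤ d/2−1 and crossed matchings T_t^d = {(j, d/2 + ((t+j) mod d/2)) : 0 ≤ j ≤ d/2−1} for d/2 ≤ t ≤ d−1 yields d−1 perfect matchings on {0,...,d−1} covering every pair (j,k) with 0 ≤ j < k ≤ d−1 exactly once. -/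
lemma aux_exists_mod (m t v : ℕ) (hm : 0 < m) (hv : v < m) :
    ∃ j, j < m ∧ (t + j) % m = v := by
  have hr : t % m < m := Nat.mod_lt _ hm
  rcases le_or_gt (t % m) v with h | h
  · refine ⟨v - t % m, by omega, ?_⟩
    rw [Nat.add_mod, Nat.mod_eq_of_lt (show v - t % m < m by omega)]
    have e : t % m + (v - t % m) = v := by omega
    rw [e, Nat.mod_eq_of_lt hv]
  · refine ⟨v + m - t % m, by omega, ?_⟩
    rw [Nat.add_mod, Nat.mod_eq_of_lt (show v + m - t % m < m by omega)]
    have e : t % m + (v + m - t % m) = v + m := by omega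
    rw [e, Nat.add_mod_right, Nat.mod_eq_of_lt hv]

lemma aux_mod_cancel (m t j1 j2 : ℕ) (h1 : j1 < m) (h2 : j2 < m)
    (h : (t + j1) % m = (t + j2) % m) : j1 = j2 := by
  have h' : j1 % m = j2 % m := Nat.ModEq.add_left_cancel' t h
  rwa [Nat.mod_eq_of_lt h1, Nat.mod_eq_of_lt h2] at h'

lemma aux_interval (m t1 t2 : ℕ) (hm : 0 < m)
    (h1l : m - 1 ≤ t1) (h1u : t1 ≤ 2 * m - 2)
    (h2l : m - 1 ≤ t2) (h2u : t2 ≤ 2 * m - 2)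
    (h : t1 % m = t2 % m) : t1 = t2 := by
  have key : ∀ s, m - 1 ≤ s → s ≤ 2 * m - 2 →
      s % m = if s < m then s else s - m := by
    intro s hl hu
    split_ifs with hs
    · exact Nat.mod_eq_of_lt hs
    · rw [Nat.mod_eq_sub_mod (by omega), Nat.mod_eq_of_lt (by omega)]
  rw [key t1 h1l h1u, key t2 h2l h2u] at h
  split_ifs at h <;> omega

/-- For even d with d/2 even: from d/2 - 1 perfect matchings covering all pairs on
{0,...,d/2-1}, the merged matchings T_t ∪ (T_t + d/2) for t < d/2 - 1 together with
the crossed matchings {(j, d/2 + (t+j) mod (d/2))} for d/2 ≤ t ≤ d-1 form d-1 perfect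
matchings on {0,...,d-1} covering every pair (j,k), j < k < d, exactly once. -/
theorem stmt_17 (d : ℕ) (hde : Even d) (hd2e : Even (d / 2)) (hpos : 0 < d)
    (M : Fin (d / 2 - 1) → Finset (ℕ × ℕ))
    (hM : ∀ t, IsPerfectMatchingOn (d / 2) (M t))
    (hMcover : ∀ j k : ℕ, j < k → k < d / 2 → ∃! t, (j, k) ∈ M t)
    (N : Fin (d - 1) → Finset (ℕ × ℕ))
    (hN : ∀ t : Fin (d - 1),
      N t = if h : (t : ℕ) < d / 2 - 1
        then M ⟨t, h⟩ ∪ (M ⟨t, h⟩).image (fun p => (p.1 + d / 2, p.2 + d / 2))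
        else (Finset.range (d / 2)).image
          (fun j => (j, d / 2 + ((t : ℕ) + j) % (d / 2)))) :
    (∀ t, IsPerfectMatchingOn d (N t)) ∧
    (∀ j k : ℕ, j < k → k < d → ∃! t, (j, k) ∈ N t) := by
  obtain ⟨a, ha⟩ := hde
  obtain ⟨b, hb⟩ := hd2e
  have hdm : d = 2 * (d / 2) := by omega
  have hmpos : 0 < d / 2 := by omega
  have hm2 : 2 ≤ d / 2 := by omega
  have hMb : ∀ t, ∀ p ∈ M t, p.1 < p.2 ∧ p.2 < d / 2 := fun t => (hM t).1.1
  have hMd : ∀ t, ∀ p ∈ M t, ∀ q ∈ M t, p ≠ q →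
      p.1 ≠ q.1 ∧ p.1 ≠ q.2 ∧ p.2 ≠ q.1 ∧ p.2 ≠ q.2 := fun t => (hM t).1.2
  have hMc : ∀ t, ∀ v < d / 2, ∃ p ∈ M t, v = p.1 ∨ v = p.2 := fun t => (hM t).2
  have hNpos : ∀ (t : Fin (d - 1)) (h : (t : ℕ) < d / 2 - 1),
      N t = M ⟨t, h⟩ ∪ (M ⟨t, h⟩).image (fun p => (p.1 + d / 2, p.2 + d / 2)) := by
    intro t h; rw [hN t, dif_pos h]
  have hNneg : ∀ (t : Fin (d - 1)), ¬ (t : ℕ) < d / 2 - 1 →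
      N t = (Finset.range (d / 2)).image
        (fun j => (j, d / 2 + ((t : ℕ) + j) % (d / 2))) := by
    intro t h; rw [hN t, dif_neg h]
  constructor
  · intro t
    by_cases ht : (t : ℕ) < d / 2 - 1
    · rw [hNpos t ht]
      refine ⟨⟨?_, ?_⟩, ?_⟩
      · intro p hp
        rcases Finset.mem_union.1 hp with h | h
        · have hb1 := hMb _ p h
          exact ⟨hb1.1, by omega⟩
        · obtain ⟨q, hq, he⟩ := Finset.mem_image.1 h
          have hb1 := hMb _ q hq
          have e1 : p.1 = q.1 + d / 2 := (congrArg Prod.fst he).symm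
          have e2 : p.2 = q.2 + d / 2 := (congrArg Prod.snd he).symm
          exact ⟨by omega, by omega⟩
      · intro p hp q hq hne
        rcases Finset.mem_union.1 hp with h1 | h1 <;>
          rcases Finset.mem_union.1 hq with h2 | h2
        · exact hMd _ p h1 q h2 hne
        · obtain ⟨q', hq', he⟩ := Finset.mem_image.1 h2
          have b1 := hMb _ p h1
          have b2 := hMb _ q' hq'
          have e1 : q.1 = q'.1 + d / 2 := (congrArg Prod.fst he).symm
          have e2 : q.2 = q'.2 + d / 2 := (congrArg Prod.snd he).symm
          exact ⟨by omega, by omega, by omega, by omega⟩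
        · obtain ⟨p', hp', he⟩ := Finset.mem_image.1 h1
          have b1 := hMb _ q h2
          have b2 := hMb _ p' hp'
          have e1 : p.1 = p'.1 + d / 2 := (congrArg Prod.fst he).symm
          have e2 : p.2 = p'.2 + d / 2 := (congrArg Prod.snd he).symm
          exact ⟨by omega, by omega, by omega, by omega⟩
        · obtain ⟨p', hp', hep⟩ := Finset.mem_image.1 h1
          obtain ⟨q', hq', heq⟩ := Finset.mem_image.1 h2
          have hne' : p' ≠ q' := by
            rintro rfl
            exact hne (hep.symm.trans heq)
          have hd4 := hMd _ p' hp' q' hq' hne'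
          have e1 : p.1 = p'.1 + d / 2 := (congrArg Prod.fst hep).symm
          have e2 : p.2 = p'.2 + d / 2 := (congrArg Prod.snd hep).symm
          have e3 : q.1 = q'.1 + d / 2 := (congrArg Prod.fst heq).symm
          have e4 : q.2 = q'.2 + d / 2 := (congrArg Prod.snd heq).symm
          exact ⟨by omega, by omega, by omega, by omega⟩
      · intro v hv
        by_cases hvm : v < d / 2
        · obtain ⟨p, hp, hvp⟩ := hMc _ v hvm
          exact ⟨p, Finset.mem_union_left _ hp, hvp⟩
        · obtain ⟨p, hp, hvp⟩ := hMc _ (v - d / 2) (by omega)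
          refine ⟨(p.1 + d / 2, p.2 + d / 2),
            Finset.mem_union_right _ (Finset.mem_image.2 ⟨p, hp, rfl⟩), ?_⟩
          rcases hvp with h | h
          · left; show v = p.1 + d / 2; omega
          · right; show v = p.2 + d / 2; omega
    · rw [hNneg t ht]
      have htl : d / 2 - 1 ≤ (t : ℕ) := by omega
      have htu : (t : ℕ) ≤ 2 * (d / 2) - 2 := by have := t.isLt; omega
      refine ⟨⟨?_, ?_⟩, ?_⟩
      · intro p hp
        obtain ⟨j, hj, he⟩ := Finset.mem_image.1 hp
        rw [Finset.mem_range] at hj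
        have hmod : ((t : ℕ) + j) % (d / 2) < d / 2 := Nat.mod_lt _ hmpos
        have e1 : p.1 = j := (congrArg Prod.fst he).symm
        have e2 : p.2 = d / 2 + ((t : ℕ) + j) % (d / 2) := (congrArg Prod.snd he).symm
        exact ⟨by omega, by omega⟩
      · intro p hp q hq hne
        obtain ⟨j1, hj1, hep⟩ := Finset.mem_image.1 hp
        obtain ⟨j2, hj2, heq⟩ := Finset.mem_image.1 hq
        rw [Finset.mem_range] at hj1 hj2
        have hjj : j1 ≠ j2 := by
          rintro rfl
          exact hne (hep.symm.trans heq)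
        have hmm : ((t : ℕ) + j1) % (d / 2) ≠ ((t : ℕ) + j2) % (d / 2) := fun h =>
          hjj (aux_mod_cancel (d / 2) (t : ℕ) j1 j2 hj1 hj2 h)
        have m1 : ((t : ℕ) + j1) % (d / 2) < d / 2 := Nat.mod_lt _ hmpos
        have m2 : ((t : ℕ) + j2) % (d / 2) < d / 2 := Nat.mod_lt _ hmpos
        have e1 : p.1 = j1 := (congrArg Prod.fst hep).symm
        have e2 : p.2 = d / 2 + ((t : ℕ) + j1) % (d / 2) := (congrArg Prod.snd hep).symm
        have e3 : q.1 = j2 := (congrArg Prod.fst heq).symm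
        have e4 : q.2 = d / 2 + ((t : ℕ) + j2) % (d / 2) := (congrArg Prod.snd heq).symm
        exact ⟨by omega, by omega, by omega, by omega⟩
      · intro v hv
        by_cases hvm : v < d / 2
        · exact ⟨(v, d / 2 + ((t : ℕ) + v) % (d / 2)),
            Finset.mem_image.2 ⟨v, Finset.mem_range.2 hvm, rfl⟩, Or.inl rfl⟩
        · obtain ⟨j, hj, hjm⟩ :=
            aux_exists_mod (d / 2) (t : ℕ) (v - d / 2) hmpos (by omega)
          refine ⟨(j, d / 2 + ((t : ℕ) + j) % (d / 2)),
            Finset.mem_image.2 ⟨j, Finset.mem_range.2 hj, rfl⟩, Or.inr ?_⟩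
          show v = d / 2 + ((t : ℕ) + j) % (d / 2)
          omega
  · intro j k hjk hkd
    rcases lt_or_ge k (d / 2) with hkm | hkm
    · -- both endpoints in lower half
      obtain ⟨t0, ht0, huniq⟩ := hMcover j k hjk hkm
      have ht0l : (t0 : ℕ) < d / 2 - 1 := t0.isLt
      have hlt : (t0 : ℕ) < d - 1 := by omega
      refine ⟨⟨(t0 : ℕ), hlt⟩, ?_, ?_⟩
      · show (j, k) ∈ N ⟨(t0 : ℕ), hlt⟩
        rw [hNpos ⟨(t0 : ℕ), hlt⟩ ht0l]
        exact Finset.mem_union_left _ ht0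
      · intro t' ht'
        by_cases hc : (t' : ℕ) < d / 2 - 1
        · rw [hNpos t' hc] at ht'
          rcases Finset.mem_union.1 ht' with h | h
          · have heq : (⟨(t' : ℕ), hc⟩ : Fin (d / 2 - 1)) = t0 := huniq _ h
            have hv : (t' : ℕ) = (t0 : ℕ) := congrArg Fin.val heq
            exact Fin.ext hv
          · obtain ⟨q, hq, he⟩ := Finset.mem_image.1 h
            have hb1 := hMb _ q hq
            have e2 : q.2 + d / 2 = k := congrArg Prod.snd he
            exfalso; omega
        · rw [hNneg t' hc] at ht'
          obtain ⟨j', hj', he⟩ := Finset.mem_image.1 ht'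
          have e2 : d / 2 + ((t' : ℕ) + j') % (d / 2) = k := congrArg Prod.snd he
          exfalso; omega
    · rcases lt_or_ge j (d / 2) with hjm | hjm
      · -- crossed pair: j < d/2 ≤ k
        have hk2 : k - d / 2 < d / 2 := by omega
        obtain ⟨s, hs, hsm⟩ := aux_exists_mod (d / 2) j (k - d / 2) hmpos hk2
        have hex : ∃ tv, d / 2 - 1 ≤ tv ∧ tv ≤ 2 * (d / 2) - 2 ∧ tv % (d / 2) = s := by
          rcases eq_or_ne s (d / 2 - 1) with rfl | hne
          · exact ⟨d / 2 - 1, le_refl _, by omega, Nat.mod_eq_of_lt (by omega)⟩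
          · exact ⟨s + d / 2, by omega, by omega,
              by rw [Nat.add_mod_right, Nat.mod_eq_of_lt hs]⟩
        obtain ⟨tv, htv1, htv2, htv3⟩ := hex
        have htvd : tv < d - 1 := by omega
        have hres : (tv + j) % (d / 2) = k - d / 2 := by
          rw [Nat.add_mod, htv3, Nat.mod_eq_of_lt hjm, Nat.add_comm s j]
          exact hsm
        refine ⟨⟨tv, htvd⟩, ?_, ?_⟩
        · show (j, k) ∈ N ⟨tv, htvd⟩
          rw [hNneg ⟨tv, htvd⟩ (show ¬ tv < d / 2 - 1 by omega)]
          refine Finset.mem_image.2 ⟨j, Finset.mem_range.2 hjm, ?_⟩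
          show (j, d / 2 + (tv + j) % (d / 2)) = (j, k)
          rw [hres]
          rw [show d / 2 + (k - d / 2) = k by omega]
        · intro t' ht'
          by_cases hc : (t' : ℕ) < d / 2 - 1
          · rw [hNpos t' hc] at ht'
            rcases Finset.mem_union.1 ht' with h | h
            · have h2 : k < d / 2 := (hMb _ _ h).2
              exfalso; omega
            · obtain ⟨q, hq, he⟩ := Finset.mem_image.1 h
              have e1 : q.1 + d / 2 = j := congrArg Prod.fst he
              exfalso; omega
          · rw [hNneg t' hc] at ht'
            obtain ⟨j', hj', he⟩ := Finset.mem_image.1 ht'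
            have e1 : j' = j := congrArg Prod.fst he
            have e2 : d / 2 + ((t' : ℕ) + j') % (d / 2) = k := congrArg Prod.snd he
            subst e1
            have hres' : ((t' : ℕ) + j') % (d / 2) = k - d / 2 := by omega
            have hcan : (t' : ℕ) % (d / 2) = tv % (d / 2) :=
              Nat.ModEq.add_right_cancel' j' (hres'.trans hres.symm)
            have ht'u : (t' : ℕ) ≤ 2 * (d / 2) - 2 := by have := t'.isLt; omega
            have ht'l : d / 2 - 1 ≤ (t' : ℕ) := by omega
            exact Fin.ext
              (aux_interval (d / 2) (t' : ℕ) tv hmpos ht'l ht'u htv1 htv2 hcan)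
      · -- both endpoints in upper half
        have hkd2 : k < 2 * (d / 2) := by omega
        obtain ⟨t0, ht0, huniq⟩ := hMcover (j - d / 2) (k - d / 2) (by omega) (by omega)
        have ht0l : (t0 : ℕ) < d / 2 - 1 := t0.isLt
        have hlt : (t0 : ℕ) < d - 1 := by omega
        refine ⟨⟨(t0 : ℕ), hlt⟩, ?_, ?_⟩
        · show (j, k) ∈ N ⟨(t0 : ℕ), hlt⟩
          rw [hNpos ⟨(t0 : ℕ), hlt⟩ ht0l]
          apply Finset.mem_union_right
          refine Finset.mem_image.2 ⟨(j - d / 2, k - d / 2), ht0, ?_⟩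
          show (j - d / 2 + d / 2, k - d / 2 + d / 2) = (j, k)
          rw [show j - d / 2 + d / 2 = j by omega, show k - d / 2 + d / 2 = k by omega]
        · intro t' ht'
          by_cases hc : (t' : ℕ) < d / 2 - 1
          · rw [hNpos t' hc] at ht'
            rcases Finset.mem_union.1 ht' with h | h
            · have h2 : k < d / 2 := (hMb _ _ h).2
              exfalso; omega
            · obtain ⟨q, hq, he⟩ := Finset.mem_image.1 h
              have e1 : q.1 + d / 2 = j := congrArg Prod.fst he
              have e2 : q.2 + d / 2 = k := congrArg Prod.snd he
              have hqe : (j - d / 2, k - d / 2) = q := by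
                rcases q with ⟨q1, q2⟩
                have e1' : q1 + d / 2 = j := e1
                have e2' : q2 + d / 2 = k := e2
                rw [show j - d / 2 = q1 by omega, show k - d / 2 = q2 by omega]
              have hmem : (j - d / 2, k - d / 2) ∈ M ⟨(t' : ℕ), hc⟩ := by
                rw [hqe]; exact hq
              have heq : (⟨(t' : ℕ), hc⟩ : Fin (d / 2 - 1)) = t0 := huniq _ hmem
              have hv : (t' : ℕ) = (t0 : ℕ) := congrArg Fin.val heq
              exact Fin.ext hv
          · rw [hNneg t' hc] at ht'
            obtain ⟨j', hj', he⟩ := Finset.mem_image.1 ht'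
            rw [Finset.mem_range] at hj'
            have e1 : j' = j := congrArg Prod.fst he
            exfalso; omega
end
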